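/- Under the setup of the previous statement (Ψ strictly increasing continuous with Ψ(0)=0, d a pseudo-metric on [0,1] with F(1) = 𝒱(Ψ,d) < ∞), the covering numbers of ([0,1], d) satisfy N([0,1], d, ε) ≤ 4·F(1)/Ψ(ε) for all 0 < ε < Ψ^{−1}(F(1)). -/
import Mathlib

/-- The set of all sums `∑ g(tᵢ, tᵢ₊₁)` over partitions `a = t₀ < t₁ < ⋯ < tₙ = b`. -/
def partitionSums (g : ℝ → ℝ → ℝ) (a b : ℝ) : Set ℝ :=
  {S | ∃ (n : ℕ) (t : ℕ → ℝ), 0 < n ∧ t 0 = a ∧ t n = b ∧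
    (∀ i < n, t i < t (i + 1)) ∧ S = ∑ i ∈ Finset.range n, g (t i) (t (i + 1))}

section Aux

variable (Ψ : ℝ → ℝ) (d : ℝ → ℝ → ℝ)

lemma psi_d_nonneg (hΨm : StrictMonoOn Ψ (Set.Ici 0)) (hΨ0 : Ψ 0 = 0)
    (hdnn : ∀ s t, 0 ≤ d s t) (a b : ℝ) : 0 ≤ Ψ (d a b) := by
  have := hΨm.monotoneOn (Set.self_mem_Ici) (Set.mem_Ici.mpr (hdnn a b)) (hdnn a b)
  linarith [hΨ0]

lemma sSup_nonneg_aux (hΨm : StrictMonoOn Ψ (Set.Ici 0)) (hΨ0 : Ψ 0 = 0)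
    (hdnn : ∀ s t, 0 ≤ d s t)
    (hbdd : BddAbove (partitionSums (fun s t => Ψ (d s t)) 0 1)) :
    0 ≤ sSup (partitionSums (fun s t => Ψ (d s t)) 0 1) := by
  have hmem : Ψ (d 0 1) ∈ partitionSums (fun s t => Ψ (d s t)) 0 1 := by
    refine ⟨1, fun i => (i : ℝ), one_pos, by norm_num, by norm_num,
      fun i _ => by push_cast; linarith, by norm_num⟩
  exact le_trans (psi_d_nonneg Ψ d hΨm hΨ0 hdnn 0 1) (le_csSup hbdd hmem)

/-- Chains starting at 0 and ending below 1 give sums below the sup. -/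
lemma chain_sum_le_of_zero (hΨm : StrictMonoOn Ψ (Set.Ici 0)) (hΨ0 : Ψ 0 = 0)
    (hdnn : ∀ s t, 0 ≤ d s t)
    (hbdd : BddAbove (partitionSums (fun s t => Ψ (d s t)) 0 1))
    (k : ℕ) (v : ℕ → ℝ) (h0 : v 0 = 0) (hk : v k ≤ 1)
    (hmono : ∀ i < k, v i < v (i + 1)) :
    ∑ i ∈ Finset.range k, Ψ (d (v i) (v (i + 1))) ≤
      sSup (partitionSums (fun s t => Ψ (d s t)) 0 1) := by
  rcases Nat.eq_zero_or_pos k with hk0 | hkpos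
  · subst hk0; simpa using sSup_nonneg_aux Ψ d hΨm hΨ0 hdnn hbdd
  rcases eq_or_lt_of_le hk with hk1 | hk1
  · exact le_csSup hbdd ⟨k, v, hkpos, h0, hk1, hmono, rfl⟩
  · set w : ℕ → ℝ := fun i => if i = k + 1 then 1 else v i with hw
    have hwmem : (∑ i ∈ Finset.range (k+1), Ψ (d (w i) (w (i + 1)))) ∈
        partitionSums (fun s t => Ψ (d s t)) 0 1 := by
      refine ⟨k + 1, w, Nat.succ_pos _, ?_, ?_, ?_, rfl⟩
      · simp [hw, h0]
      · simp [hw]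
      · intro i hi
        rcases Nat.lt_or_ge i k with h | h
        · have h1 : i ≠ k + 1 := by omega
          have h2 : i + 1 ≠ k + 1 := by omega
          simp only [hw, if_neg h1, if_neg h2]
          exact hmono i h
        · have hik : i = k := by omega
          subst hik
          simp only [hw, if_neg (by omega : i ≠ i + 1), if_pos rfl]
          exact hk1
    have hsum : ∑ i ∈ Finset.range (k+1), Ψ (d (w i) (w (i + 1)))
        = (∑ i ∈ Finset.range k, Ψ (d (v i) (v (i + 1)))) + Ψ (d (v k) 1) := by
      rw [Finset.sum_range_succ]
      congr 1
      · apply Finset.sum_congr rfl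
        intro i hi
        rw [Finset.mem_range] at hi
        have h1 : i ≠ k + 1 := by omega
        have h2 : i + 1 ≠ k + 1 := by omega
        simp [hw, if_neg h1, if_neg h2]
      · simp [hw, if_neg (by omega : k ≠ k + 1)]
    have := le_csSup hbdd hwmem
    rw [hsum] at this
    have hnn := psi_d_nonneg Ψ d hΨm hΨ0 hdnn (v k) 1
    linarith

/-- General chains in `[0,1]` give sums below the sup. -/
lemma chain_sum_le (hΨm : StrictMonoOn Ψ (Set.Ici 0)) (hΨ0 : Ψ 0 = 0)
    (hdnn : ∀ s t, 0 ≤ d s t)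
    (hbdd : BddAbove (partitionSums (fun s t => Ψ (d s t)) 0 1))
    (k : ℕ) (v : ℕ → ℝ) (h0 : 0 ≤ v 0) (hk : v k ≤ 1)
    (hmono : ∀ i < k, v i < v (i + 1)) :
    ∑ i ∈ Finset.range k, Ψ (d (v i) (v (i + 1))) ≤
      sSup (partitionSums (fun s t => Ψ (d s t)) 0 1) := by
  rcases eq_or_lt_of_le h0 with h0' | h0'
  · exact chain_sum_le_of_zero Ψ d hΨm hΨ0 hdnn hbdd k v h0'.symm hk hmono
  · set w : ℕ → ℝ := fun i => if i = 0 then 0 else v (i - 1) with hw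
    have hwmono : ∀ i < k + 1, w i < w (i + 1) := by
      intro i hi
      rcases Nat.eq_zero_or_pos i with h | h
      · subst h; simpa [hw] using h0'
      · have h1 : i ≠ 0 := by omega
        have h2 : i + 1 ≠ 0 := by omega
        simp only [hw, if_neg h1, if_neg h2]
        have h3 : i + 1 - 1 = i := by omega
        rw [h3]
        have h4 := hmono (i - 1) (by omega)
        rwa [show i - 1 + 1 = i from by omega] at h4
    have hkey := chain_sum_le_of_zero Ψ d hΨm hΨ0 hdnn hbdd (k + 1) w
      (by simp [hw]) (by simpa [hw] using hk) hwmono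
    have hsum : ∑ i ∈ Finset.range (k+1), Ψ (d (w i) (w (i + 1)))
        = (∑ i ∈ Finset.range k, Ψ (d (v i) (v (i + 1)))) + Ψ (d 0 (v 0)) := by
      rw [Finset.sum_range_succ']
      have h1 : ∑ i ∈ Finset.range k, Ψ (d (w (i+1)) (w (i+1+1)))
          = ∑ i ∈ Finset.range k, Ψ (d (v i) (v (i+1))) :=
        Finset.sum_congr rfl (fun i _ => by simp [hw])
      rw [h1]
      simp [hw]
    rw [hsum] at hkey
    have hnn := psi_d_nonneg Ψ d hΨm hΨ0 hdnn 0 (v 0)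
    linarith

/-- A finite ε-separated subset of `[0,1]` has controlled cardinality. -/
lemma sep_card_bound (hΨm : StrictMonoOn Ψ (Set.Ici 0)) (hΨ0 : Ψ 0 = 0)
    (hdnn : ∀ s t, 0 ≤ d s t)
    (hbdd : BddAbove (partitionSums (fun s t => Ψ (d s t)) 0 1))
    (ε : ℝ) (hε : 0 < ε)
    (s : Finset ℝ) (hsub : (↑s : Set ℝ) ⊆ Set.Icc 0 1)
    (hsep : ∀ x ∈ s, ∀ y ∈ s, x ≠ y → ε ≤ d x y) :
    ((s.card : ℝ) - 1) * Ψ ε ≤ sSup (partitionSums (fun s t => Ψ (d s t)) 0 1) := by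
  have hΨε : 0 ≤ Ψ ε := by
    have := hΨm.monotoneOn (Set.self_mem_Ici) (Set.mem_Ici.mpr hε.le) hε.le
    linarith [hΨ0]
  have hF := sSup_nonneg_aux Ψ d hΨm hΨ0 hdnn hbdd
  rcases Nat.eq_zero_or_pos s.card with hm | hm
  · rw [hm]; push_cast; nlinarith
  set m := s.card with hmdef
  have e := s.orderIsoOfFin rfl
  have hlt : ∀ i : ℕ, min i (m - 1) < m := fun i => by omega
  set v : ℕ → ℝ := fun i => (e ⟨min i (m-1), hlt i⟩ : ℝ) with hv
  have hvmem : ∀ i, v i ∈ s := fun i => (e ⟨min i (m-1), hlt i⟩).2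
  have hvmono : ∀ i < m - 1, v i < v (i + 1) := by
    intro i hi
    have h1 : min i (m-1) = i := by omega
    have h2 : min (i+1) (m-1) = i + 1 := by omega
    have hlt' : (⟨min i (m-1), hlt i⟩ : Fin m) < ⟨min (i+1) (m-1), hlt (i+1)⟩ := by
      simp [Fin.lt_def, h1, h2]
    have := e.strictMono hlt'
    exact_mod_cast this
  have hchain := chain_sum_le Ψ d hΨm hΨ0 hdnn hbdd (m - 1) v
    (hsub (hvmem 0)).1 (hsub (hvmem (m-1))).2 hvmono
  have hterm : ∀ i ∈ Finset.range (m - 1), Ψ ε ≤ Ψ (d (v i) (v (i + 1))) := by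
    intro i hi
    rw [Finset.mem_range] at hi
    have hne : v i ≠ v (i + 1) := ne_of_lt (hvmono i hi)
    have hd := hsep _ (hvmem i) _ (hvmem (i+1)) hne
    exact hΨm.monotoneOn (Set.mem_Ici.mpr hε.le) (Set.mem_Ici.mpr (hdnn _ _)) hd
  have hsum : ((m - 1 : ℕ) : ℝ) * Ψ ε ≤ ∑ i ∈ Finset.range (m - 1), Ψ (d (v i) (v (i + 1))) := by
    calc ((m - 1 : ℕ) : ℝ) * Ψ ε = ∑ _i ∈ Finset.range (m - 1), Ψ ε := by
          rw [Finset.sum_const, Finset.card_range, nsmul_eq_mul]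
      _ ≤ _ := Finset.sum_le_sum hterm
  have hcast : ((m - 1 : ℕ) : ℝ) = (m : ℝ) - 1 := by
    push_cast [Nat.cast_sub hm]; ring
  rw [hcast] at hsum
  linarith

end Aux

theorem covering_number_bound (Ψ : ℝ → ℝ) (hΨc : ContinuousOn Ψ (Set.Ici 0))
    (hΨm : StrictMonoOn Ψ (Set.Ici 0)) (hΨ0 : Ψ 0 = 0)
    (hΨtop : Filter.Tendsto Ψ Filter.atTop Filter.atTop)
    (d : ℝ → ℝ → ℝ) (hd0 : ∀ s, d s s = 0) (hdnn : ∀ s t, 0 ≤ d s t)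
    (hdsymm : ∀ s t, d s t = d t s) (hdtri : ∀ s t u, d s u ≤ d s t + d t u)
    (hbdd : BddAbove (partitionSums (fun s t => Ψ (d s t)) 0 1)) :
    ∀ ε : ℝ, 0 < ε → Ψ ε < sSup (partitionSums (fun s t => Ψ (d s t)) 0 1) →
      ∃ s : Finset ℝ, (↑s : Set ℝ) ⊆ Set.Icc 0 1 ∧
        (∀ x ∈ Set.Icc (0 : ℝ) 1, ∃ c ∈ s, d c x < ε) ∧
        (s.card : ℝ) ≤ 4 * sSup (partitionSums (fun u v => Ψ (d u v)) 0 1) / Ψ ε := by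
  classical
  intro ε hε hεF
  set F := sSup (partitionSums (fun s t => Ψ (d s t)) 0 1) with hFdef
  have hΨε : 0 < Ψ ε := by
    have := hΨm (Set.self_mem_Ici) (Set.mem_Ici.mpr hε.le) hε
    linarith [hΨ0]
  have hF0 : 0 < F := lt_trans hΨε hεF
  set P : ℕ → Prop := fun n => ∃ s : Finset ℝ, (↑s : Set ℝ) ⊆ Set.Icc 0 1 ∧
    (∀ x ∈ s, ∀ y ∈ s, x ≠ y → ε ≤ d x y) ∧ n ≤ s.card with hP
  have hP0 : P 0 := ⟨∅, by simp, by simp, by simp⟩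
  set M : ℕ := ⌈F / Ψ ε⌉₊ + 2 with hM
  have hPM : ¬ P M := by
    rintro ⟨s, hsub, hsep, hcard⟩
    have hb := sep_card_bound Ψ d hΨm hΨ0 hdnn hbdd ε hε s hsub hsep
    have h1 : (M : ℝ) ≤ s.card := by exact_mod_cast hcard
    have h2 : F / Ψ ε ≤ (⌈F / Ψ ε⌉₊ : ℝ) := Nat.le_ceil _
    have h3 : (M : ℝ) = (⌈F / Ψ ε⌉₊ : ℝ) + 2 := by rw [hM]; push_cast; ring
    have h5 : F = (F / Ψ ε) * Ψ ε := by field_simp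
    nlinarith
  have hPn : P (Nat.findGreatest P M) := Nat.findGreatest_spec (Nat.zero_le _) hP0
  have hnM : Nat.findGreatest P M < M := by
    rcases lt_or_eq_of_le (Nat.findGreatest_le (P := P) M) with h | h
    · exact h
    · exact absurd (h ▸ hPn) hPM
  have hPn1 : ¬ P (Nat.findGreatest P M + 1) :=
    Nat.findGreatest_is_greatest (Nat.lt_succ_self _) (by omega)
  obtain ⟨s, hsub, hsep, hcard⟩ := hPn
  have hcard' : s.card = Nat.findGreatest P M := by
    by_contra h
    exact hPn1 ⟨s, hsub, hsep, by omega⟩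
  refine ⟨s, hsub, ?_, ?_⟩
  · intro x hx
    by_contra hcov
    push_neg at hcov
    have hxs : x ∉ s := by
      intro hxs
      have := hcov x hxs
      rw [hd0] at this
      linarith
    refine hPn1 ⟨insert x s, ?_, ?_, ?_⟩
    · rw [Finset.coe_insert]
      exact Set.insert_subset hx hsub
    · intro a ha b hb hab
      rw [Finset.mem_insert] at ha hb
      rcases ha with rfl | ha
      · rcases hb with rfl | hb
        · exact absurd rfl hab
        · rw [hdsymm]; exact hcov b hb
      · rcases hb with rfl | hb
        · exact hcov a ha
        · exact hsep a ha b hb hab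
    · rw [Finset.card_insert_of_notMem hxs, hcard']
  · have hb := sep_card_bound Ψ d hΨm hΨ0 hdnn hbdd ε hε s hsub hsep
    rw [le_div_iff₀ hΨε]
    nlinarith
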